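/- Suppose a group G acts on a Polish space X, and for x ∈ X with a local orbit O(x, U, G₀) (for U open, G₀ a set of group elements) that is somewhere dense in U, the set U_x = U ∩ int(cl(O(x, U, G₀))) is a nonempty open set which is invariant under the local equivalence relation ∼ generated by single G₀-moves staying inside U; moreover O(x, U, G₀) ⊆ U_x and O(x, U, G₀) equals the local orbit of x computed inside U_x. -/

import Mathlib

/-- Suppose a Polish group `G` acts continuously on a Polish space `X`, `U` is
open, `G₀ ⊆ G`, and the local orbit `O = O(x, U, G₀)` of a point `x ∈ U` is
somewhere dense in `U`. Then `U_x = U ∩ int(cl O)` is a nonempty open set,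
invariant under the local equivalence relation `∼` generated by single
`G₀`-moves staying inside `U`; moreover `O ⊆ U_x` and `O` coincides with the
local orbit of `x` computed inside `U_x`. -/
theorem local_orbit_somewhere_dense_structure
    {G X : Type*} [Group G] [TopologicalSpace G] [IsTopologicalGroup G]
    [PolishSpace G] [TopologicalSpace X] [PolishSpace X]
    [MulAction G X] [ContinuousSMul G X]
    (U : Set X) (hU : IsOpen U) (G₀ : Set G) (x : X) (hx : x ∈ U)
    (R : X → X → Prop)
    (hR : R = fun a b => a ∈ U ∧ b ∈ U ∧ ∃ g ∈ G₀, b = g • a)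
    (O : Set X) (hO : O = {y | Relation.EqvGen R x y})
    (hsd : (interior (closure O) ∩ U).Nonempty) :
    (let Ux : Set X := U ∩ interior (closure O)
     Ux.Nonempty ∧ IsOpen Ux ∧
     (∀ a b : X, a ∈ Ux → Relation.EqvGen R a b → b ∈ Ux) ∧
     O ⊆ Ux ∧
     O = {y | Relation.EqvGen
        (fun a b => a ∈ Ux ∧ b ∈ Ux ∧ ∃ g ∈ G₀, b = g • a) x y}) := by
  intro Ux
  have hUxopen : IsOpen Ux := hU.inter isOpen_interior
  have hUxne : Ux.Nonempty := by
    obtain ⟨z, hz1, hz2⟩ := hsd; exact ⟨z, hz2, hz1⟩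
  -- one-step lemma
  have hstep : ∀ (g : G) (a b : X), a ∈ Ux → b ∈ U → b = g • a →
      (∀ y, y ∈ O → y ∈ U → g • y ∈ U → g • y ∈ O) → b ∈ Ux := by
    intro g a b ha hbU hba hmap
    set V : Set X := interior (closure O) ∩ U ∩ (fun z => g • z) ⁻¹' U with hV
    have hVopen : IsOpen V :=
      (isOpen_interior.inter hU).inter (hU.preimage (continuous_const_smul g))
    have haV : a ∈ V := ⟨⟨ha.2, ha.1⟩, by simpa [← hba] using hbU⟩
    have hVsub : V ⊆ closure (V ∩ O) := fun v hv =>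
      hVopen.inter_closure ⟨hv, interior_subset hv.1.1⟩
    have himg : (fun z => g • z) '' (V ∩ O) ⊆ O := by
      rintro w ⟨y, ⟨⟨⟨-, hyU⟩, hgyU⟩, hyO⟩, rfl⟩
      exact hmap y hyO hyU hgyU
    have hb1 : b ∈ (fun z => g • z) '' V := ⟨a, haV, hba.symm⟩
    have hopenimg : IsOpen ((fun z => g • z) '' V) :=
      (Homeomorph.smul g).isOpen_image.2 hVopen
    have hsubcl : (fun z => g • z) '' V ⊆ closure O := by
      rintro w ⟨v, hv, rfl⟩
      have h1 : g • v ∈ (fun z => g • z) '' closure (V ∩ O) := ⟨v, hVsub hv, rfl⟩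
      have h2 : (fun z => g • z) '' closure (V ∩ O)
          = closure ((fun z => g • z) '' (V ∩ O)) :=
        (Homeomorph.smul g).image_closure (V ∩ O)
      rw [h2] at h1
      exact closure_mono himg h1
    exact ⟨hbU, interior_maximal hsubcl hopenimg hb1⟩
  -- invariance in both directions
  have hinv : ∀ a b : X, Relation.EqvGen R a b →
      ((a ∈ Ux → b ∈ Ux) ∧ (b ∈ Ux → a ∈ Ux)) := by
    intro a b h
    induction h with
    | rel a b hab =>
      rw [hR] at hab
      obtain ⟨haU, hbU, g, hg, hba⟩ := hab
      constructor
      · intro ha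
        refine hstep g a b ha hbU hba ?_
        intro y hyO hyU hgyU
        rw [hO] at hyO ⊢
        exact hyO.trans _ _ _ (Relation.EqvGen.rel _ _ (by rw [hR]; exact ⟨hyU, hgyU, g, hg, rfl⟩))
      · intro hb
        refine hstep g⁻¹ b a hb haU (by rw [hba, inv_smul_smul]) ?_
        intro y hyO hyU hgyU
        rw [hO] at hyO ⊢
        refine hyO.trans _ _ _ (Relation.EqvGen.symm _ _ (Relation.EqvGen.rel _ _ ?_))
        rw [hR]
        exact ⟨hgyU, by simpa using hyU, g, hg, by rw [smul_inv_smul]⟩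
    | refl a => exact ⟨id, id⟩
    | symm a b h ih => exact ⟨ih.2, ih.1⟩
    | trans a b c h1 h2 ih1 ih2 => exact ⟨fun h => ih2.1 (ih1.1 h), fun h => ih1.2 (ih2.2 h)⟩
  have hxUx : x ∈ Ux := by
    obtain ⟨z, hzU, hzI⟩ := hUxne
    have : z ∈ closure O := interior_subset hzI
    obtain ⟨y, hyUx, hyO⟩ := mem_closure_iff.1 this Ux hUxopen ⟨hzU, hzI⟩
    have hxy : Relation.EqvGen R x y := by rw [hO] at hyO; exact hyO
    exact (hinv x y hxy).2 hyUx
  have hOsub : O ⊆ Ux := by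
    intro y hy
    rw [hO] at hy
    exact (hinv x y hy).1 hxUx
  refine ⟨hUxne, hUxopen, fun a b ha h => (hinv a b h).1 ha, hOsub, ?_⟩
  ext y
  simp only [Set.mem_setOf_eq]
  constructor
  · intro hy
    have key : ∀ a b : X, Relation.EqvGen R a b → Relation.EqvGen R x a →
        Relation.EqvGen
          (fun a b => a ∈ Ux ∧ b ∈ Ux ∧ ∃ g ∈ G₀, b = g • a) a b := by
      intro a b h
      induction h with
      | rel a b hab =>
        intro hxa
        have haO : a ∈ O := by rw [hO]; exact hxa
        have hbO : b ∈ O := by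
          rw [hO]; exact hxa.trans _ _ _ (Relation.EqvGen.rel _ _ hab)
        rw [hR] at hab
        exact Relation.EqvGen.rel _ _ ⟨hOsub haO, hOsub hbO, hab.2.2⟩
      | refl a => exact fun _ => Relation.EqvGen.refl a
      | symm a b h ih =>
        intro hxa
        exact Relation.EqvGen.symm _ _ (ih (hxa.trans _ _ _ (Relation.EqvGen.symm _ _ h)))
      | trans a b c h1 h2 ih1 ih2 =>
        intro hxa
        exact (ih1 hxa).trans _ _ _ (ih2 (hxa.trans _ _ _ h1))
    rw [hO] at hy
    exact key x y hy (Relation.EqvGen.refl x)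
  · intro hy
    rw [hO]
    refine Relation.EqvGen.mono ?_ _ _ hy
    intro a b hab
    rw [hR]
    exact ⟨hab.1.1, hab.2.1.1, hab.2.2⟩
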